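/- Let A ∈ ℝ^{s×s}, B ∈ ℝ^{s×m}, E ∈ ℝ^{s×1}, F ∈ ℝ^{1×s}, K, L ∈ ℝ^{m×s}, let M ∈ ℝ^{s×s} be symmetric positive semidefinite, let κ ∈ ℝ, and let b̲ ≤ b̄ be real numbers. For b ∈ ℝ set A_b := A + BK + b(BL + EF). If A_0ᵀ M A_0 ⪯ κM, A_{b̲}ᵀ M A_{b̲} ⪯ κM, and A_{b̄}ᵀ M A_{b̄} ⪯ κM, then A_bᵀ M A_b ⪯ κM for every b ∈ [b̲, b̄] ∪ {0}. -/

import Mathlib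

open Matrix

private lemma quad_key (c0 c1 c2 b bl bu : ℝ) (hc2 : 0 ≤ c2) (hbl : bl ≤ b) (hbu : b ≤ bu)
    (h1 : 0 ≤ c0 + c1 * bl - c2 * bl ^ 2) (h2 : 0 ≤ c0 + c1 * bu - c2 * bu ^ 2) :
    0 ≤ c0 + c1 * b - c2 * b ^ 2 := by
  rcases eq_or_lt_of_le (hbl.trans hbu) with h | h
  · have hbb : b = bl := le_antisymm (h ▸ hbu) hbl
    simpa [hbb] using h1
  · nlinarith [mul_nonneg (sub_nonneg.2 hbu) h1, mul_nonneg (sub_nonneg.2 hbl) h2,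
      mul_nonneg hc2 (mul_nonneg (mul_nonneg (sub_nonneg.2 hbu) (sub_nonneg.2 hbl))
        (sub_nonneg.2 (hbl.trans hbu)))]

/-- The matrix `A_b = A + B K + b (B L + E F)`. -/
noncomputable def Amat {s m : ℕ}
    (A : Matrix (Fin s) (Fin s) ℝ) (B : Matrix (Fin s) (Fin m) ℝ)
    (E : Matrix (Fin s) (Fin 1) ℝ) (F : Matrix (Fin 1) (Fin s) ℝ)
    (K L : Matrix (Fin m) (Fin s) ℝ) (b : ℝ) : Matrix (Fin s) (Fin s) ℝ :=
  A + B * K + b • (B * L + E * F)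

/-- If `A_bᵀ M A_b ⪯ κ M` for `b ∈ {0, b̲, b̄}`, then
`A_bᵀ M A_b ⪯ κ M` for every `b ∈ [b̲, b̄] ∪ {0}`. -/
theorem Ab_quadratic_contraction_interval
    {s m : ℕ} (A : Matrix (Fin s) (Fin s) ℝ) (B : Matrix (Fin s) (Fin m) ℝ)
    (E : Matrix (Fin s) (Fin 1) ℝ) (F : Matrix (Fin 1) (Fin s) ℝ)
    (K L : Matrix (Fin m) (Fin s) ℝ)
    (M : Matrix (Fin s) (Fin s) ℝ) (hM : M.PosSemidef)
    (κ bl bu : ℝ) (hb : bl ≤ bu)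
    (h0 : (κ • M - (Amat A B E F K L 0)ᵀ * M * (Amat A B E F K L 0)).PosSemidef)
    (hl : (κ • M - (Amat A B E F K L bl)ᵀ * M * (Amat A B E F K L bl)).PosSemidef)
    (hu : (κ • M - (Amat A B E F K L bu)ᵀ * M * (Amat A B E F K L bu)).PosSemidef) :
    ∀ b ∈ Set.Icc bl bu ∪ {(0 : ℝ)},
      (κ • M - (Amat A B E F K L b)ᵀ * M * (Amat A B E F K L b)).PosSemidef := by
  have hsym : ∀ y z : Fin s → ℝ, y ⬝ᵥ M *ᵥ z = z ⬝ᵥ M *ᵥ y := by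
    intro y z
    rw [dotProduct_mulVec, ← mulVec_transpose]
    conv_lhs => rw [show Mᵀ = M from hM.1]
    exact dotProduct_comm _ _
  have quadform : ∀ (c : ℝ) (x : Fin s → ℝ),
      x ⬝ᵥ ((κ • M - (Amat A B E F K L c)ᵀ * M * (Amat A B E F K L c)) *ᵥ x)
      = κ * (x ⬝ᵥ M *ᵥ x)
        - (((A + B * K) *ᵥ x) ⬝ᵥ M *ᵥ ((A + B * K) *ᵥ x)
           + 2 * c * (((A + B * K) *ᵥ x) ⬝ᵥ M *ᵥ ((B * L + E * F) *ᵥ x))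
           + c ^ 2 * (((B * L + E * F) *ᵥ x) ⬝ᵥ M *ᵥ ((B * L + E * F) *ᵥ x))) := by
    intro c x
    set u := (A + B * K) *ᵥ x with hu'
    set w := (B * L + E * F) *ᵥ x with hw'
    have hAc : (Amat A B E F K L c) *ᵥ x = u + c • w := by
      simp [Amat, add_mulVec, smul_mulVec, hu', hw']
    have key : x ⬝ᵥ ((Amat A B E F K L c)ᵀ * M * (Amat A B E F K L c)) *ᵥ x
        = (u + c • w) ⬝ᵥ M *ᵥ (u + c • w) := by
      rw [← mulVec_mulVec, ← mulVec_mulVec, dotProduct_mulVec, ← mulVec_transpose,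
        transpose_transpose, hAc]
    rw [sub_mulVec, dotProduct_sub, smul_mulVec, dotProduct_smul, key]
    rw [mulVec_add, mulVec_smul, dotProduct_add, add_dotProduct, add_dotProduct,
      dotProduct_smul, smul_dotProduct, smul_dotProduct, dotProduct_smul]
    have := hsym w u
    simp only [smul_eq_mul]
    rw [this]
    ring
  intro b hbmem
  rcases hbmem with ⟨hbl, hbu⟩ | hb0
  swap
  · simp only [Set.mem_singleton_iff] at hb0
    subst hb0; exact h0
  refine PosSemidef.of_dotProduct_mulVec_nonneg ?_ ?_
  · have h1 : ((Amat A B E F K L b)ᵀ * M * (Amat A B E F K L b)).IsHermitian := by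
      have := isHermitian_conjTranspose_mul_mul (Amat A B E F K L b) hM.1
      rwa [conjTranspose_eq_transpose_of_trivial] at this
    have h2 : (κ • M).IsHermitian := by
      unfold Matrix.IsHermitian
      rw [conjTranspose_smul, hM.1.eq, star_trivial]
    exact h2.sub h1
  · intro x
    have hx := fun (c : ℝ) (hc : (κ • M - (Amat A B E F K L c)ᵀ * M * (Amat A B E F K L c)).PosSemidef) => hc.dotProduct_mulVec_nonneg x
    simp only [star_trivial] at hx ⊢
    set u := (A + B * K) *ᵥ x
    set w := (B * L + E * F) *ᵥ x
    have hql := hx bl hl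
    have hqu := hx bu hu
    rw [quadform] at hql hqu ⊢
    have hc2 : 0 ≤ w ⬝ᵥ M *ᵥ w := by simpa using hM.dotProduct_mulVec_nonneg w
    have := quad_key (κ * (x ⬝ᵥ M *ᵥ x) - u ⬝ᵥ M *ᵥ u) (-(2 * (u ⬝ᵥ M *ᵥ w)))
      (w ⬝ᵥ M *ᵥ w) b bl bu hc2 hbl hbu (by nlinarith [hql]) (by nlinarith [hqu])
    nlinarith [this]
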